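/- Let G be a group with a unitary representation ρ on a Hilbert space H, and let λ₀ be a left-invariant mean on the space of matrix coefficients of unitary representations of G (i.e., λ₀(φ(g₀·)) = λ₀(φ) for all g₀). Then for all x, y ∈ H, λ₀ applied to the matrix coefficient g ↦ ⟨x, ρ(g)y⟩ equals ⟨P_ρ x, P_ρ y⟩, where P_ρ is the orthogonal projection onto the subspace of ρ-fixed vectors. -/

import Mathlib

/-- A left-invariant mean applied to a matrix coefficient of a unitary representation computes
the inner product of the projections onto the fixed vectors. -/
theorem stmt10 {G : Type*} [Group G] {H : Type*} [NormedAddCommGroup H]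
    [InnerProductSpace ℂ H] [CompleteSpace H]
    (ρ : G →* (H ≃ₗᵢ[ℂ] H))
    (lam : (G → ℂ) →ₗ[ℂ] ℂ)
    (hunital : lam (fun _ => 1) = 1)
    (hpos : ∀ φ : G → ℂ, (∀ g, (φ g).im = 0 ∧ 0 ≤ (φ g).re) →
      (lam φ).im = 0 ∧ 0 ≤ (lam φ).re)
    (hinv : ∀ (x y : H) (g₀ : G),
      lam (fun g => (inner ℂ x (ρ (g₀ * g) y) : ℂ)) = lam (fun g => (inner ℂ x (ρ g y) : ℂ)))
    (P : H →L[ℂ] H)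
    (hPfix : ∀ (v : H) (g : G), ρ g (P v) = P v)
    (hPproj : ∀ v w : H, (∀ g : G, ρ g w = w) → (inner ℂ (v - P v) w : ℂ) = 0)
    (x y : H) :
    lam (fun g => (inner ℂ x (ρ g y) : ℂ)) = (inner ℂ (P x) (P y) : ℂ) := by
  classical
  -- lam of a constant function
  have hconst : ∀ c : ℂ, lam (fun _ => c) = c := by
    intro c
    have h : (fun _ : G => c) = c • (fun _ : G => (1:ℂ)) := by
      funext g; simp
    rw [h, map_smul, hunital, smul_eq_mul, mul_one]
  -- boundedness on real-valued functions
  have hrb : ∀ (φ : G → ℂ) (C : ℝ), (∀ g, (φ g).im = 0) → (∀ g, |(φ g).re| ≤ C) →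
      (lam φ).im = 0 ∧ |(lam φ).re| ≤ C := by
    intro φ C h0 hC
    have e1 : lam (fun g => (C:ℂ) + φ g) = (C:ℂ) + lam φ := by
      have h : (fun g => (C:ℂ) + φ g) = (fun _ : G => (C:ℂ)) + φ := rfl
      rw [h, map_add, hconst]
    have e2 : lam (fun g => (C:ℂ) - φ g) = (C:ℂ) - lam φ := by
      have h : (fun g => (C:ℂ) - φ g) = (fun _ : G => (C:ℂ)) - φ := rfl
      rw [h, map_sub, hconst]
    have h1 := hpos (fun g => (C:ℂ) + φ g) (by
      intro g
      constructor
      · simp [h0 g]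
      · have := abs_le.mp (hC g)
        simp only [Complex.add_re, Complex.ofReal_re]
        linarith [this.1])
    have h2 := hpos (fun g => (C:ℂ) - φ g) (by
      intro g
      constructor
      · simp [h0 g]
      · have := abs_le.mp (hC g)
        simp only [Complex.sub_re, Complex.ofReal_re]
        linarith [this.2])
    rw [e1] at h1
    rw [e2] at h2
    constructor
    · have := h1.1
      simpa using this
    · rw [abs_le]
      constructor
      · have := h1.2
        simp only [Complex.add_re, Complex.ofReal_re] at this
        linarith
      · have := h2.2
        simp only [Complex.sub_re, Complex.ofReal_re] at this
        linarith
  -- boundedness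
  have hbound : ∀ (φ : G → ℂ) (C : ℝ), (∀ g, ‖φ g‖ ≤ C) → ‖lam φ‖ ≤ 2 * C := by
    intro φ C hC
    have hre := hrb (fun g => ((φ g).re : ℂ)) C (by intro g; simp)
      (by intro g; simp only [Complex.ofReal_re]
          exact le_trans (Complex.abs_re_le_norm _) (hC g))
    have him := hrb (fun g => ((φ g).im : ℂ)) C (by intro g; simp)
      (by intro g; simp only [Complex.ofReal_re]
          exact le_trans (Complex.abs_im_le_norm _) (hC g))
    have hdec : φ = (fun g => ((φ g).re : ℂ)) + Complex.I • (fun g => ((φ g).im : ℂ)) := by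
      funext g
      simp [Complex.ext_iff]
    rw [hdec, map_add, map_smul]
    have n1 : ‖lam (fun g => ((φ g).re : ℂ))‖ ≤ C := by
      refine le_trans (Complex.norm_le_abs_re_add_abs_im _) ?_
      rw [hre.1]
      simpa using hre.2
    have n2 : ‖lam (fun g => ((φ g).im : ℂ))‖ ≤ C := by
      refine le_trans (Complex.norm_le_abs_re_add_abs_im _) ?_
      rw [him.1]
      simpa using him.2
    calc ‖lam (fun g => ((φ g).re : ℂ)) + Complex.I • lam (fun g => ((φ g).im : ℂ))‖
        ≤ ‖lam (fun g => ((φ g).re : ℂ))‖ + ‖Complex.I • lam (fun g => ((φ g).im : ℂ))‖ :=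
          norm_add_le _ _
      _ ≤ C + C := by
          refine add_le_add n1 ?_
          rw [smul_eq_mul, norm_mul, Complex.norm_I, one_mul]
          exact n2
      _ = 2 * C := by ring
  -- moving the unitary across the inner product
  have hmove : ∀ (g : G) (u v : H), (inner ℂ ((ρ g) u) v : ℂ) = inner ℂ u ((ρ g⁻¹) v) := by
    intro g u v
    have h1 : (ρ g) ((ρ g⁻¹) v) = v := by
      have : (ρ g) ((ρ g⁻¹) v) = (ρ (g * g⁻¹)) v := by rw [map_mul]; rfl
      simpa using this
    have h2 := (ρ g).inner_map_map u ((ρ g⁻¹) v)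
    rw [h1] at h2
    exact h2
  -- the Riesz functional
  let ℓ : H →ₗ[ℂ] ℂ :=
    { toFun := fun z => starRingEnd ℂ (lam (fun g => (inner ℂ z ((ρ g) y) : ℂ)))
      map_add' := by
        intro a b
        have h : (fun g => (inner ℂ (a + b) ((ρ g) y) : ℂ))
            = (fun g => (inner ℂ a ((ρ g) y) : ℂ)) + (fun g => (inner ℂ b ((ρ g) y) : ℂ)) := by
          funext g; simp [inner_add_left]
        simp only [h, map_add]
      map_smul' := by
        intro c a
        have h : (fun g => (inner ℂ (c • a) ((ρ g) y) : ℂ))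
            = (starRingEnd ℂ c) • (fun g => (inner ℂ a ((ρ g) y) : ℂ)) := by
          funext g; simp [inner_smul_left, mul_comm]
        simp only [h, map_smul, smul_eq_mul, map_mul, RingHom.id_apply,
          Complex.conj_conj] }
  have hℓ_bound : ∀ z : H, ‖ℓ z‖ ≤ (2 * ‖y‖) * ‖z‖ := by
    intro z
    have hC : ∀ g, ‖(inner ℂ z ((ρ g) y) : ℂ)‖ ≤ ‖z‖ * ‖y‖ := by
      intro g
      calc ‖(inner ℂ z ((ρ g) y) : ℂ)‖ ≤ ‖z‖ * ‖(ρ g) y‖ := norm_inner_le_norm _ _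
        _ = ‖z‖ * ‖y‖ := by rw [(ρ g).norm_map]
    have := hbound _ (‖z‖ * ‖y‖) hC
    have hn : ‖ℓ z‖ = ‖lam (fun g => (inner ℂ z ((ρ g) y) : ℂ))‖ := by
      simp [ℓ]
    rw [hn]
    calc ‖lam (fun g => (inner ℂ z ((ρ g) y) : ℂ))‖ ≤ 2 * (‖z‖ * ‖y‖) := this
      _ = (2 * ‖y‖) * ‖z‖ := by ring
  let ℓc : H →L[ℂ] ℂ := ℓ.mkContinuous (2 * ‖y‖) hℓ_bound
  set b : H := (InnerProductSpace.toDual ℂ H).symm ℓc with hbdef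
  have hb : ∀ z : H, (inner ℂ b z : ℂ) = ℓc z := by
    intro z
    rw [hbdef]
    exact InnerProductSpace.toDual_symm_apply
  -- lam of the coefficient equals pairing with b
  have hlam : ∀ z : H, lam (fun g => (inner ℂ z ((ρ g) y) : ℂ)) = inner ℂ z b := by
    intro z
    have h1 : (inner ℂ b z : ℂ) = starRingEnd ℂ (lam (fun g => (inner ℂ z ((ρ g) y) : ℂ))) := hb z
    have h2 : (inner ℂ z b : ℂ) = starRingEnd ℂ (inner ℂ b z : ℂ) := (inner_conj_symm _ _).symm
    rw [h2, h1, Complex.conj_conj]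
  -- b is a fixed vector
  have hbinv : ∀ (g : G) (z : H), (inner ℂ ((ρ g) z) b : ℂ) = inner ℂ z b := by
    intro g z
    rw [← hlam, ← hlam z]
    have h : (fun g' => (inner ℂ ((ρ g) z) ((ρ g') y) : ℂ))
        = fun g' => (inner ℂ z ((ρ (g⁻¹ * g')) y) : ℂ) := by
      funext g'
      rw [hmove]
      congr 1
      rw [map_mul]
      rfl
    rw [h]
    exact hinv z y g⁻¹
  have hbfix : ∀ g : G, (ρ g) b = b := by
    intro g
    refine ext_inner_left ℂ ?_
    intro z
    have h1 : (ρ g) ((ρ g⁻¹) z) = z := by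
      have : (ρ g) ((ρ g⁻¹) z) = (ρ (g * g⁻¹)) z := by rw [map_mul]; rfl
      simpa using this
    calc (inner ℂ z ((ρ g) b) : ℂ) = inner ℂ ((ρ g) ((ρ g⁻¹) z)) ((ρ g) b) := by rw [h1]
      _ = inner ℂ ((ρ g⁻¹) z) b := (ρ g).inner_map_map _ _
      _ = inner ℂ z b := hbinv g⁻¹ z
  -- the coefficient of P x against y is constant
  have hcc : ∀ g : G, (inner ℂ (P x) ((ρ g) y) : ℂ) = inner ℂ (P x) y := by
    intro g
    calc (inner ℂ (P x) ((ρ g) y) : ℂ) = inner ℂ ((ρ g) (P x)) ((ρ g) y) := by rw [hPfix x g]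
      _ = inner ℂ (P x) y := (ρ g).inner_map_map _ _
  -- finish
  have step1 : lam (fun g => (inner ℂ x ((ρ g) y) : ℂ)) = inner ℂ x b := hlam x
  have step2 : (inner ℂ x b : ℂ) = inner ℂ (P x) b := by
    have h0 := hPproj x b hbfix
    rw [inner_sub_left] at h0
    linear_combination h0
  have step3 : (inner ℂ (P x) b : ℂ) = inner ℂ (P x) y := by
    rw [← hlam (P x)]
    have h : (fun g => (inner ℂ (P x) ((ρ g) y) : ℂ)) = fun _ => (inner ℂ (P x) y : ℂ) := by
      funext g; exact hcc g
    rw [h, hconst]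
  have step4 : (inner ℂ (P x) y : ℂ) = inner ℂ (P x) (P y) := by
    have h0 := hPproj y (P x) (hPfix x)
    have h1 : (inner ℂ (P x) (y - P y) : ℂ) = 0 := by
      rw [← inner_conj_symm, h0, map_zero]
    rw [inner_sub_right] at h1
    linear_combination h1
  rw [step1, step2, step3, step4]
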